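/- Let L be a laminar family on V, S a set such that L ∪ {S} is laminar, and P a walk whose vertices all lie in S. Then every set R ∈ L crossed by an edge of P satisfies R ⊊ S, and if P crosses every R ∈ L at most twice, then the total weight of P under the laminar-induced weight function w(u,v) = Σ_{R ∈ L : (u,v) ∈ δ(R)} y_R is at most Σ_{R ∈ L, R ⊊ S} 2·y_R. -/

import Mathlib

/-- An edge `e` crosses a set `R` if exactly one of its endpoints lies in `R`. -/
def crossB {V : Type*} [DecidableEq V] (R : Finset V) (e : V × V) : Bool :=
  decide (e.1 ∈ R) != decide (e.2 ∈ R)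

private lemma sum_map_finset_sum {α β : Type*} (P : List α) (L : Finset β) (g : β → α → ℝ) :
    (P.map (fun e => ∑ R ∈ L, g R e)).sum = ∑ R ∈ L, (P.map (g R)).sum := by
  induction P with
  | nil => simp
  | cons a t ih => simp [ih, Finset.sum_add_distrib]

private lemma sum_map_ite {α : Type*} (P : List α) (p : α → Bool) (c : ℝ) :
    (P.map (fun e => if p e then c else 0)).sum = c * P.countP p := by
  induction P with
  | nil => simp
  | cons a t ih =>
    by_cases h : p a <;> simp [List.countP_cons, h, ih] <;> ring

theorem walk_inside_laminar_cost {V : Type*} [DecidableEq V]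
    (L : Finset (Finset V)) (S : Finset V) (y : Finset V → ℝ)
    (hy : ∀ R ∈ L, 0 ≤ y R)
    (hlam : ∀ A ∈ insert S L, ∀ B ∈ insert S L, A ⊆ B ∨ B ⊆ A ∨ A ∩ B = ∅)
    (P : List (V × V)) (hP : ∀ e ∈ P, e.1 ∈ S ∧ e.2 ∈ S) :
    (∀ R ∈ L, (∃ e ∈ P, crossB R e = true) → R ⊂ S) ∧
    ((∀ R ∈ L, P.countP (fun e => crossB R e) ≤ 2) →
      (P.map (fun e => ∑ R ∈ L.filter (fun R => crossB R e = true), y R)).sum ≤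
        2 * ∑ R ∈ L.filter (fun R => R ⊂ S), y R) := by
  have key : ∀ R ∈ L, (∃ e ∈ P, crossB R e = true) → R ⊂ S := by
    intro R hR ⟨e, heP, hcross⟩
    obtain ⟨h1, h2⟩ := hP e heP
    unfold crossB at hcross
    obtain ⟨⟨vin, vinR, vinS⟩, ⟨vout, voutR, voutS⟩⟩ :
        (∃ v, v ∈ R ∧ v ∈ S) ∧ (∃ v, v ∉ R ∧ v ∈ S) := by
      by_cases ha : e.1 ∈ R <;> by_cases hb : e.2 ∈ R <;> simp [ha, hb] at hcross
      · exact ⟨⟨e.1, ha, h1⟩, ⟨e.2, hb, h2⟩⟩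
      · exact ⟨⟨e.2, hb, h2⟩, ⟨e.1, ha, h1⟩⟩
    rcases hlam R (Finset.mem_insert_of_mem hR) S (Finset.mem_insert_self _ _) with
      h | h | h
    · exact (Finset.ssubset_iff_of_subset h).mpr ⟨vout, voutS, voutR⟩
    · exact absurd (h voutS) voutR
    · exact absurd (Finset.mem_inter.mpr ⟨vinR, vinS⟩) (by simp [h])
  refine ⟨key, fun hcount => ?_⟩
  have hrw : ∀ e : V × V, (∑ R ∈ L.filter (fun R => crossB R e = true), y R) =
      ∑ R ∈ L, if crossB R e then y R else 0 := by
    intro e; rw [Finset.sum_filter]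
  calc (P.map (fun e => ∑ R ∈ L.filter (fun R => crossB R e = true), y R)).sum
      = (P.map (fun e => ∑ R ∈ L, if crossB R e then y R else 0)).sum := by
        simp only [hrw]
    _ = ∑ R ∈ L, (P.map (fun e => if crossB R e then y R else 0)).sum :=
        sum_map_finset_sum P L _
    _ = ∑ R ∈ L, y R * P.countP (fun e => crossB R e) :=
        Finset.sum_congr rfl fun R _ => sum_map_ite P _ _
    _ ≤ ∑ R ∈ L, (if R ⊂ S then 2 * y R else 0) := by
        apply Finset.sum_le_sum
        intro R hR
        by_cases hc : P.countP (fun e => crossB R e) = 0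
        · rw [hc]
          have : (0:ℝ) ≤ if R ⊂ S then 2 * y R else 0 := by
            split
            · have := hy R hR; linarith
            · exact le_rfl
          simpa using this
        · have hpos : 0 < P.countP (fun e => crossB R e) := Nat.pos_of_ne_zero hc
          obtain ⟨e, heP, he⟩ := List.countP_pos_iff.mp hpos
          have hss : R ⊂ S := key R hR ⟨e, heP, by simpa using he⟩
          rw [if_pos hss]
          have h2 := hcount R hR
          calc y R * (P.countP (fun e => crossB R e) : ℝ) ≤ y R * 2 := by
                apply mul_le_mul_of_nonneg_left _ (hy R hR)
                exact_mod_cast h2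
            _ = 2 * y R := by ring
    _ = 2 * ∑ R ∈ L.filter (fun R => R ⊂ S), y R := by
        rw [Finset.mul_sum, Finset.sum_filter]
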